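/- Let Q ∈ M_n(ℝ) be a symmetric matrix and set g(λ) = 2⟨λ, Qλ⟩ − H_n[λ]. Suppose there is no pair (λ, ν) ∈ ℝⁿ × ℝⁿ satisfying simultaneously: (i) 4Qλ − (4/n)·(λ_0 log λ_0, …, λ_{n−1} log λ_{n−1})ᵀ − ν = 0; (ii) 0 < ‖λ‖₂² < n; (iii) λ_j ≥ 0 for all 0 ≤ j ≤ n−1; (iv) λ_j·ν_j = 0 for all 0 ≤ j ≤ n−1; (v) ν_j ≥ 0 for all 0 ≤ j ≤ n−1. Then g(λ) ≥ 0 for every λ ∈ [0,∞)ⁿ with ‖λ‖₂ = 1. -/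

import Mathlib

open scoped BigOperators
open Matrix

/-- Entropy functional `H_n[λ]`. -/
noncomputable def entH (n : ℕ) (l : Fin n → ℝ) : ℝ :=
  (1 / n : ℝ) * ∑ x : Fin n, l x ^ 2 * Real.log (l x ^ 2)
    - ((∑ x : Fin n, l x ^ 2) / n) * Real.log ((∑ x : Fin n, l x ^ 2) / n)

/-- The objective functional `g(λ) = 2⟨λ,Qλ⟩ - H_n[λ]`. -/
noncomputable def Gfun (n : ℕ) (Q : Matrix (Fin n) (Fin n) ℝ) (l : Fin n → ℝ) : ℝ :=
  2 * (∑ j, l j * Q.mulVec l j) - entH n l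

lemma Gfun_smul (n : ℕ) (hn : 0 < n) (Q : Matrix (Fin n) (Fin n) ℝ) (l : Fin n → ℝ)
    (t : ℝ) (ht : 0 < t) (hs : (∑ j, l j ^ 2) ≠ 0) :
    Gfun n Q (t • l) = t ^ 2 * Gfun n Q l := by
  have hnne : (n : ℝ) ≠ 0 := Nat.cast_ne_zero.mpr hn.ne'
  have ht2 : (t ^ 2 : ℝ) ≠ 0 := pow_ne_zero 2 ht.ne'
  have hq : (∑ j, (t • l) j * Q.mulVec (t • l) j) = t ^ 2 * ∑ j, l j * Q.mulVec l j := by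
    rw [Matrix.mulVec_smul, Finset.mul_sum]
    refine Finset.sum_congr rfl fun j _ => ?_
    simp only [Pi.smul_apply, smul_eq_mul]
    ring
  have hsq : (∑ j, ((t • l) j) ^ 2) = t ^ 2 * ∑ j, l j ^ 2 := by
    rw [Finset.mul_sum]
    refine Finset.sum_congr rfl fun j _ => ?_
    simp only [Pi.smul_apply, smul_eq_mul]
    ring
  have hA : (∑ x, ((t • l) x) ^ 2 * Real.log (((t • l) x) ^ 2))
      = t ^ 2 * (∑ x, l x ^ 2 * Real.log (l x ^ 2))
        + (t ^ 2 * Real.log (t ^ 2)) * ∑ x, l x ^ 2 := by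
    rw [Finset.mul_sum, Finset.mul_sum, ← Finset.sum_add_distrib]
    refine Finset.sum_congr rfl fun x _ => ?_
    rcases eq_or_ne (l x) 0 with h0 | h0
    · simp [h0]
    · have : ((t • l) x) ^ 2 = t ^ 2 * l x ^ 2 := by
        simp only [Pi.smul_apply, smul_eq_mul]; ring
      rw [this, Real.log_mul ht2 (pow_ne_zero 2 h0)]
      ring
  have hent : entH n (t • l) = t ^ 2 * entH n l := by
    rw [entH, entH, hA, hsq]
    rw [show t ^ 2 * (∑ x, l x ^ 2) / (n:ℝ) = t ^ 2 * ((∑ x, l x ^ 2) / n) by ring]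
    rw [Real.log_mul ht2 (div_ne_zero hs hnne)]
    field_simp
    ring
  rw [Gfun, Gfun, hq, hent]
  ring

lemma hasDerivAt_sq_log (x : ℝ) :
    HasDerivAt (fun y : ℝ => y ^ 2 * Real.log (y ^ 2))
      (2 * x * Real.log (x ^ 2) + 2 * x) x := by
  rcases eq_or_ne x 0 with rfl | hx
  · have h0 : (2:ℝ) * 0 * Real.log (0 ^ 2) + 2 * 0 = 0 := by simp
    rw [h0, hasDerivAt_iff_tendsto_slope]
    have heq : ∀ᶠ y in nhdsWithin (0:ℝ) {(0:ℝ)}ᶜ,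
        2 * (y * Real.log y) = slope (fun y : ℝ => y ^ 2 * Real.log (y ^ 2)) 0 y := by
      filter_upwards [self_mem_nhdsWithin] with y hy
      have hy0 : y ≠ 0 := hy
      rw [slope_def_field]
      rw [Real.log_pow]
      field_simp
      ring
    have hlim : Filter.Tendsto (fun y : ℝ => 2 * (y * Real.log y))
        (nhdsWithin (0:ℝ) {(0:ℝ)}ᶜ) (nhds 0) := by
      have := (Real.continuous_mul_log.tendsto 0).const_mul 2
      simp only [Real.log_zero, mul_zero, zero_mul] at this
      exact this.mono_left nhdsWithin_le_nhds
    exact hlim.congr' heq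
  · have h1 : HasDerivAt (fun y : ℝ => y ^ 2) ((2:ℕ) * x ^ 1) x := hasDerivAt_pow 2 x
    have h2 : HasDerivAt (fun y : ℝ => Real.log (y ^ 2)) (((2:ℕ) * x ^ 1) / x ^ 2) x :=
      h1.log (pow_ne_zero 2 hx)
    have := h1.mul h2
    convert this using 1
    · rfl
    · rfl
    · rfl
    field_simp
    push_cast
    ring

lemma hasDerivAt_upd (n : ℕ) (μ : Fin n → ℝ) (j i : Fin n) :
    HasDerivAt (fun y : ℝ => Function.update μ j y i)
      (if i = j then 1 else 0) (μ j) := by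
  rcases eq_or_ne i j with rfl | h
  · simpa using (hasDerivAt_id (μ i)).congr_of_eventuallyEq
      (Filter.Eventually.of_forall fun y => by simp)
  · simpa [h] using (hasDerivAt_const (μ j) (μ i)).congr_of_eventuallyEq
      (Filter.Eventually.of_forall fun y => by simp [Function.update_of_ne h])

lemma hasDerivAt_psi (n : ℕ) (hn : 0 < n) (Q : Matrix (Fin n) (Fin n) ℝ) (hQ : Qᵀ = Q)
    (μ : Fin n → ℝ) (hμs : (∑ i, μ i ^ 2) = n) (η : ℝ) (j : Fin n) :
    HasDerivAt
      (fun y : ℝ => Gfun n Q (Function.update μ j y)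
        - (η / n) * ∑ i, (Function.update μ j y i) ^ 2)
      (4 * Q.mulVec μ j - (4 / n) * (μ j * Real.log (μ j)) - (2 * η / n) * μ j)
      (μ j) := by
  have hnne : (n : ℝ) ≠ 0 := Nat.cast_ne_zero.mpr hn.ne'
  have hsym : ∀ i k, Q i k = Q k i := by
    intro i k
    have := congrFun (congrFun hQ i) k
    rw [Matrix.transpose_apply] at this
    exact this.symm
  set d : Fin n → ℝ := fun i => if i = j then 1 else 0 with hd
  have hupd : ∀ i, HasDerivAt (fun y : ℝ => Function.update μ j y i) (d i) (μ j) :=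
    fun i => hasDerivAt_upd n μ j i
  have hq2 : HasDerivAt
      (fun y : ℝ => ∑ i, ∑ k, Function.update μ j y i * (Q i k * Function.update μ j y k))
      (∑ i, ∑ k, (d i * (Q i k * μ k) + μ i * (Q i k * d k))) (μ j) := by
    refine HasDerivAt.fun_sum fun i _ => HasDerivAt.fun_sum fun k _ => ?_
    have := (hupd i).fun_mul ((hupd k).const_mul (Q i k))
    simpa [Function.update_eq_self] using this
  have hDval : (∑ i, ∑ k, (d i * (Q i k * μ k) + μ i * (Q i k * d k)))
      = 2 * Q.mulVec μ j := by
    have h1 : ∀ i, (∑ k, (d i * (Q i k * μ k) + μ i * (Q i k * d k)))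
        = d i * (∑ k, Q i k * μ k) + μ i * Q i j := by
      intro i
      rw [Finset.sum_add_distrib, ← Finset.mul_sum]
      congr 1
      rw [Finset.sum_eq_single j (by intro k _ hk; simp [hd, hk]) (by simp)]
      simp [hd]
    calc (∑ i, ∑ k, (d i * (Q i k * μ k) + μ i * (Q i k * d k)))
        = ∑ i, (d i * (∑ k, Q i k * μ k) + μ i * Q i j) :=
          Finset.sum_congr rfl fun i _ => h1 i
      _ = (∑ k, Q j k * μ k) + ∑ i, μ i * Q i j := by
          rw [Finset.sum_add_distrib]
          congr 1
          rw [Finset.sum_eq_single j (by intro i _ hi; simp [hd, hi]) (by simp)]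
          simp [hd]
      _ = 2 * Q.mulVec μ j := by
          rw [show (∑ i, μ i * Q i j) = ∑ i, Q j i * μ i from
            Finset.sum_congr rfl fun i _ => by rw [hsym i j]; ring]
          simp only [Matrix.mulVec, dotProduct]
          ring
  have hq : HasDerivAt
      (fun y : ℝ => ∑ i, Function.update μ j y i * Q.mulVec (Function.update μ j y) i)
      (2 * Q.mulVec μ j) (μ j) := by
    have hqfun : (fun y : ℝ => ∑ i, Function.update μ j y i * Q.mulVec (Function.update μ j y) i)
        = fun y : ℝ => ∑ i, ∑ k, Function.update μ j y i * (Q i k * Function.update μ j y k) := by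
      funext y
      exact Finset.sum_congr rfl fun i _ => by
        simp [Matrix.mulVec, dotProduct, Finset.mul_sum]
    rw [hqfun, ← hDval]
    exact hq2
  have hA : HasDerivAt
      (fun y : ℝ => ∑ x, (Function.update μ j y x) ^ 2 * Real.log ((Function.update μ j y x) ^ 2))
      (2 * μ j * Real.log (μ j ^ 2) + 2 * μ j) (μ j) := by
    have hterm : ∀ i : Fin n, HasDerivAt
        (fun y : ℝ => (Function.update μ j y i) ^ 2 * Real.log ((Function.update μ j y i) ^ 2))
        (if i = j then 2 * μ j * Real.log (μ j ^ 2) + 2 * μ j else 0) (μ j) := by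
      intro i
      rcases eq_or_ne i j with rfl | h
      · simpa using (hasDerivAt_sq_log (μ i)).congr_of_eventuallyEq
          (Filter.Eventually.of_forall fun y => by simp)
      · simp only [h, if_false]
        exact (hasDerivAt_const (μ j) ((μ i) ^ 2 * Real.log ((μ i) ^ 2))).congr_of_eventuallyEq
          (Filter.Eventually.of_forall fun y => by simp only [Function.update_of_ne h])
    have := HasDerivAt.fun_sum (fun i (_ : i ∈ Finset.univ) => hterm i)
    simpa using this
  have hC : HasDerivAt (fun y : ℝ => ∑ i, (Function.update μ j y i) ^ 2)
      (2 * μ j) (μ j) := by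
    have hterm : ∀ i : Fin n, HasDerivAt
        (fun y : ℝ => (Function.update μ j y i) ^ 2)
        (if i = j then 2 * μ j else 0) (μ j) := by
      intro i
      rcases eq_or_ne i j with rfl | h
      · have := hasDerivAt_pow 2 (μ i)
        simp only [Nat.cast_ofNat, pow_one] at this
        simpa using this.congr_of_eventuallyEq
          (Filter.Eventually.of_forall fun y => by simp)
      · simp only [h, if_false]
        exact (hasDerivAt_const (μ j) ((μ i) ^ 2)).congr_of_eventuallyEq
          (Filter.Eventually.of_forall fun y => by simp only [Function.update_of_ne h])
    have := HasDerivAt.fun_sum (fun i (_ : i ∈ Finset.univ) => hterm i)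
    simpa using this
  have hL : HasDerivAt
      (fun y : ℝ => ((∑ x, (Function.update μ j y x) ^ 2) / n)
        * Real.log ((∑ x, (Function.update μ j y x) ^ 2) / n))
      ((Real.log 1 + 1) * (2 * μ j / n)) (μ j) := by
    have hp : HasDerivAt (fun y : ℝ => (∑ x, (Function.update μ j y x) ^ 2) / (n : ℝ))
        (2 * μ j / n) (μ j) := hC.div_const n
    have hval : (∑ x, (Function.update μ j (μ j) x) ^ 2) / (n : ℝ) = 1 := by
      rw [Function.update_eq_self, hμs]
      field_simp
    have hml : HasDerivAt (fun x : ℝ => x * Real.log x) (Real.log 1 + 1)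
        ((∑ x, (Function.update μ j (μ j) x) ^ 2) / (n : ℝ)) := by
      rw [hval]
      exact Real.hasDerivAt_mul_log one_ne_zero
    have := hml.comp (μ j) hp
    simpa [Function.comp_def] using this
  have hfinal := ((hq.const_mul (2:ℝ)).sub
      ((hA.const_mul ((1:ℝ)/n)).sub hL)).sub (hC.const_mul (η/n))
  have hfun2 : (fun y : ℝ => Gfun n Q (Function.update μ j y)
        - (η / n) * ∑ i, (Function.update μ j y i) ^ 2)
      = (fun y : ℝ =>
          2 * (∑ i, Function.update μ j y i * Q.mulVec (Function.update μ j y) i)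
          - ((1 / n : ℝ) * ∑ x, (Function.update μ j y x) ^ 2
              * Real.log ((Function.update μ j y x) ^ 2)
            - ((∑ x, (Function.update μ j y x) ^ 2) / n)
              * Real.log ((∑ x, (Function.update μ j y x) ^ 2) / n))
          - (η / n) * ∑ i, (Function.update μ j y i) ^ 2) := rfl
  rw [hfun2]
  convert hfinal using 1
  · rfl
  · rfl
  · rfl
  rw [Real.log_one, Real.log_pow]
  push_cast
  ring

/-- if the KKT system associated with the minimization of
`g(λ) = 2⟨λ,Qλ⟩ - H_n[λ]` has no solution, then `g ≥ 0` on the positive unit sphere.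
(Note `Real.log 0 = 0`, so the convention `x log x = 0` at `x = 0` holds.) -/
theorem kkt_nonneg (n : ℕ) (hn : 1 ≤ n) (Q : Matrix (Fin n) (Fin n) ℝ) (hQ : Qᵀ = Q)
    (hno : ¬ ∃ (l ν : Fin n → ℝ),
        (∀ j, 4 * Q.mulVec l j - (4 / n : ℝ) * (l j * Real.log (l j)) - ν j = 0) ∧
        (0 < ∑ j, l j ^ 2) ∧ ((∑ j, l j ^ 2) < n) ∧
        (∀ j, 0 ≤ l j) ∧ (∀ j, l j * ν j = 0) ∧ (∀ j, 0 ≤ ν j)) :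
    ∀ l : Fin n → ℝ, (∀ j, 0 ≤ l j) → (∑ j, l j ^ 2) = 1 →
      0 ≤ 2 * (∑ j, l j * Q.mulVec l j) - entH n l := by
  intro l hl hs1
  by_contra hneg
  push_neg at hneg
  have hn0 : 0 < n := hn
  have hnR : (0:ℝ) < n := by exact_mod_cast hn0
  have hnne : (n:ℝ) ≠ 0 := ne_of_gt hnR
  have hGl : Gfun n Q l < 0 := hneg
  set K : Set (Fin n → ℝ) := {x | (∀ j, 0 ≤ x j) ∧ (∑ j, x j ^ 2) = n} with hKdef
  have hone : (fun _ : Fin n => (1:ℝ)) ∈ K := by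
    constructor
    · intro j; norm_num
    · simp
  have hsumsq : Continuous fun x : Fin n → ℝ => ∑ j, x j ^ 2 :=
    continuous_finset_sum _ fun j _ => (continuous_apply j).pow 2
  have hGcont : Continuous (Gfun n Q) := by
    have hqc : Continuous fun x : Fin n → ℝ => ∑ j, x j * Q.mulVec x j := by
      refine continuous_finset_sum _ fun j _ => (continuous_apply j).mul ?_
      have : (fun x : Fin n → ℝ => Q.mulVec x j) = fun x => ∑ k, Q j k * x k := by
        funext x; simp [Matrix.mulVec, dotProduct]
      rw [this]
      exact continuous_finset_sum _ fun k _ => continuous_const.mul (continuous_apply k)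
    have hAc : Continuous fun x : Fin n → ℝ => ∑ i, x i ^ 2 * Real.log (x i ^ 2) :=
      continuous_finset_sum _ fun i _ =>
        Real.continuous_mul_log.comp ((continuous_apply i).pow 2)
    have hLc : Continuous fun x : Fin n → ℝ =>
        ((∑ j, x j ^ 2) / n) * Real.log ((∑ j, x j ^ 2) / n) :=
      Real.continuous_mul_log.comp (hsumsq.div_const n)
    exact (continuous_const.mul hqc).sub ((continuous_const.mul hAc).sub hLc)
  have hKc : IsCompact K := by
    have hcl : IsClosed K := by
      rw [hKdef, Set.setOf_and]
      refine IsClosed.inter ?_ (isClosed_eq hsumsq continuous_const)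
      have : {x : Fin n → ℝ | ∀ j, 0 ≤ x j} = ⋂ j, {x : Fin n → ℝ | 0 ≤ x j} := by
        ext x; simp [Set.mem_iInter]
      rw [this]
      exact isClosed_iInter fun j => isClosed_le continuous_const (continuous_apply j)
    have hbd : Bornology.IsBounded K := by
      refine (Metric.isBounded_closedBall (x := (0 : Fin n → ℝ))
        (r := Real.sqrt n)).subset ?_
      intro x hx
      rw [Metric.mem_closedBall, dist_pi_le_iff (Real.sqrt_nonneg _)]
      intro j
      rw [Real.dist_eq]
      simp only [Pi.zero_apply, sub_zero]
      have h1 : x j ^ 2 ≤ (n : ℝ) := by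
        rw [← hx.2]
        exact Finset.single_le_sum (fun i _ => sq_nonneg (x i)) (Finset.mem_univ j)
      have h2 : |x j| ^ 2 ≤ (n : ℝ) := by rwa [sq_abs]
      nlinarith [Real.sq_sqrt hnR.le, Real.sqrt_nonneg (n:ℝ), abs_nonneg (x j)]
    exact Metric.isCompact_of_isClosed_isBounded hcl hbd
  obtain ⟨μ, hμK, hmin⟩ := hKc.exists_isMinOn ⟨_, hone⟩ hGcont.continuousOn
  have hμnn : ∀ j, 0 ≤ μ j := hμK.1
  have hμs : (∑ i, μ i ^ 2) = (n : ℝ) := hμK.2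
  set η : ℝ := Gfun n Q μ with hηdef
  have hseg : (Real.sqrt n • l) ∈ K := by
    constructor
    · intro j
      exact mul_nonneg (Real.sqrt_nonneg _) (hl j)
    · have heach : ∀ j, (Real.sqrt n • l) j ^ 2 = (n : ℝ) * l j ^ 2 := by
        intro j
        simp only [Pi.smul_apply, smul_eq_mul, mul_pow]
        rw [Real.sq_sqrt hnR.le]
      rw [Finset.sum_congr rfl fun j _ => heach j, ← Finset.mul_sum, hs1, mul_one]
  have hηneg : η < 0 := by
    have h1 : Gfun n Q μ ≤ Gfun n Q (Real.sqrt n • l) := hmin hseg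
    have h2 : Gfun n Q (Real.sqrt n • l) = Real.sqrt n ^ 2 * Gfun n Q l :=
      Gfun_smul n hn0 Q l _ (Real.sqrt_pos.mpr hnR) (by rw [hs1]; norm_num)
    rw [h2, Real.sq_sqrt hnR.le] at h1
    have h3 : (n : ℝ) * Gfun n Q l < 0 := mul_neg_of_pos_of_neg hnR hGl
    exact lt_of_le_of_lt h1 h3
  have hglob : ∀ x : Fin n → ℝ, (∀ j, 0 ≤ x j) →
      0 ≤ Gfun n Q x - (η / n) * ∑ j, x j ^ 2 := by
    intro x hx
    rcases eq_or_ne (∑ j, x j ^ 2) 0 with h0 | h0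
    · have hx0 : ∀ j, x j = 0 := by
        intro j
        have := (Finset.sum_eq_zero_iff_of_nonneg
          (fun i _ => sq_nonneg (x i))).mp h0 j (Finset.mem_univ j)
        exact sq_eq_zero_iff.mp this
      have hG0 : Gfun n Q x = 0 := by
        simp [Gfun, entH, hx0]
      rw [hG0, h0]
      simp
    · have hspos : 0 < ∑ j, x j ^ 2 :=
        lt_of_le_of_ne (Finset.sum_nonneg fun i _ => sq_nonneg (x i)) (Ne.symm h0)
      set t : ℝ := Real.sqrt ((n : ℝ) / (∑ j, x j ^ 2)) with htdef
      have htpos : 0 < t := Real.sqrt_pos.mpr (div_pos hnR hspos)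
      have ht2 : t ^ 2 = (n : ℝ) / (∑ j, x j ^ 2) := Real.sq_sqrt (div_pos hnR hspos).le
      have htx : (t • x) ∈ K := by
        constructor
        · intro j; exact mul_nonneg htpos.le (hx j)
        · have heach : ∀ j, (t • x) j ^ 2 = t ^ 2 * x j ^ 2 := by
            intro j; simp only [Pi.smul_apply, smul_eq_mul, mul_pow]
          rw [Finset.sum_congr rfl fun j _ => heach j, ← Finset.mul_sum, ht2]
          field_simp
      have h1 : Gfun n Q μ ≤ Gfun n Q (t • x) := hmin htx
      rw [Gfun_smul n hn0 Q x t htpos h0, ht2] at h1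
      have h2 : η * (∑ j, x j ^ 2) ≤
          ((n : ℝ) / (∑ j, x j ^ 2) * Gfun n Q x) * (∑ j, x j ^ 2) :=
        mul_le_mul_of_nonneg_right h1 hspos.le
      have h3 : ((n : ℝ) / (∑ j, x j ^ 2) * Gfun n Q x) * (∑ j, x j ^ 2)
          = (n : ℝ) * Gfun n Q x := by
        field_simp
      rw [h3] at h2
      rw [sub_nonneg, div_mul_eq_mul_div, div_le_iff₀ hnR]
      linarith
  set ν : Fin n → ℝ := fun j =>
    4 * Q.mulVec μ j - (4 / n) * (μ j * Real.log (μ j)) - (2 * η / n) * μ j with hνdef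
  have hψ0 : ∀ j : Fin n,
      Gfun n Q (Function.update μ j (μ j))
        - (η / n) * ∑ i, (Function.update μ j (μ j) i) ^ 2 = 0 := by
    intro j
    rw [Function.update_eq_self, hμs]
    field_simp
    exact sub_self _
  have hψnn : ∀ (j : Fin n) (y : ℝ), 0 ≤ y →
      0 ≤ Gfun n Q (Function.update μ j y)
        - (η / n) * ∑ i, (Function.update μ j y i) ^ 2 := by
    intro j y hy
    refine hglob _ fun i => ?_
    rcases eq_or_ne i j with rfl | h
    · simpa using hy
    · simpa [Function.update_of_ne h] using hμnn i
  have hkkt : ∀ j : Fin n, 0 ≤ ν j ∧ μ j * ν j = 0 := by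
    intro j
    have hd := hasDerivAt_psi n hn0 Q hQ μ hμs η j
    have hνj : ν j = 4 * Q.mulVec μ j - (4 / n) * (μ j * Real.log (μ j))
        - (2 * η / n) * μ j := rfl
    rcases eq_or_ne (μ j) 0 with hμj | hμj
    · constructor
      · rw [hνj]
        have hd' := hd.hasDerivWithinAt (s := Set.Ioi (μ j))
        rw [hasDerivWithinAt_iff_tendsto_slope] at hd'
        rw [Set.diff_singleton_eq_self (by simp : μ j ∉ Set.Ioi (μ j))] at hd'
        haveI hnb : (nhdsWithin (μ j) (Set.Ioi (μ j))).NeBot := by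
          rw [hμj]; exact nhdsGT_neBot (0:ℝ)
        refine ge_of_tendsto hd' ?_
        filter_upwards [self_mem_nhdsWithin] with y hy
        have hy' : μ j < y := hy
        have h1 := hψnn j y (by rw [hμj] at hy'; exact hy'.le)
        have h2 := hψ0 j
        rw [slope_def_field]
        apply div_nonneg
        · show 0 ≤ (Gfun n Q (Function.update μ j y)
              - (η / n) * ∑ i, (Function.update μ j y i) ^ 2)
            - (Gfun n Q (Function.update μ j (μ j))
              - (η / n) * ∑ i, (Function.update μ j (μ j) i) ^ 2)
          rw [h2, sub_zero]
          exact h1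
        · linarith
      · rw [hμj, zero_mul]
    · have hμjpos : 0 < μ j := lt_of_le_of_ne (hμnn j) (Ne.symm hμj)
      have hloc : IsLocalMin (fun y : ℝ => Gfun n Q (Function.update μ j y)
          - (η / n) * ∑ i, (Function.update μ j y i) ^ 2) (μ j) := by
        filter_upwards [eventually_gt_nhds hμjpos] with y hy
        show Gfun n Q (Function.update μ j (μ j))
            - (η / n) * ∑ i, (Function.update μ j (μ j) i) ^ 2
          ≤ Gfun n Q (Function.update μ j y)
            - (η / n) * ∑ i, (Function.update μ j y i) ^ 2
        rw [hψ0 j]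
        exact hψnn j y hy.le
      have hz := hloc.hasDerivAt_eq_zero hd
      rw [hνj, hz]
      exact ⟨le_refl 0, mul_zero _⟩
  set c : ℝ := Real.exp (η / 2) with hcdef
  have hcpos : 0 < c := Real.exp_pos _
  have hclt1 : c < 1 := by
    rw [hcdef, Real.exp_lt_one_iff]
    linarith
  have hsum : (∑ j, (c * μ j) ^ 2) = c ^ 2 * (n : ℝ) := by
    rw [← hμs, Finset.mul_sum]
    exact Finset.sum_congr rfl fun j _ => by ring
  exact hno ⟨fun j => c * μ j, fun j => c * ν j, by
    intro j
    have hmv : Q.mulVec (fun k => c * μ k) j = c * Q.mulVec μ j := by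
      simp only [Matrix.mulVec, dotProduct, Finset.mul_sum]
      exact Finset.sum_congr rfl fun k _ => by ring
    have hνj : ν j = 4 * Q.mulVec μ j - (4 / n) * (μ j * Real.log (μ j))
        - (2 * η / n) * μ j := rfl
    rcases eq_or_ne (μ j) 0 with h0 | h0
    · have hν0 : ν j = 4 * Q.mulVec μ j := by rw [hνj, h0]; simp
      simp only [hmv, h0, mul_zero, Real.log_zero, zero_mul, hν0]
      ring
    · have hlog : Real.log (c * μ j) = η / 2 + Real.log (μ j) := by
        rw [Real.log_mul (ne_of_gt hcpos) h0, hcdef, Real.log_exp]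
      simp only [hmv, hlog, hνj]
      field_simp
      ring, by
    rw [hsum]; positivity, by
    rw [hsum]
    have hc2 : c ^ 2 < 1 := by nlinarith
    nlinarith, by
    intro j
    exact mul_nonneg hcpos.le (hμnn j), by
    intro j
    have := (hkkt j).2
    calc c * μ j * (c * ν j) = c ^ 2 * (μ j * ν j) := by ring
      _ = 0 := by rw [this, mul_zero], by
    intro j
    exact mul_nonneg hcpos.le (hkkt j).1⟩
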